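/- Let (X_n)_{n ≥ 0} be an i.i.d. sequence of integer-valued random variables with ℙ[X_0 ≥ -1] = 1 and ℙ[X_0 = -1] > 0, whose mean exists and lies in (0, ∞] (i.e., the negative part of X_0 is integrable and either X_0 is not integrable or E[X_0] > 0). Then the series ∑_{k = -1}^{∞} k · ℙ[X_0 = k] · c^k converges absolutely and its sum is strictly negative, where c = ℙ[∃ n ≥ 0, S_n = -1]. (That is, the Doob h-transformed increment distribution k ↦ ℙ[X_0 = k] c^k has strictly negative mean.) -/

import Mathlib

open MeasureTheory ProbabilityTheory
open scoped ENNReal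

/-- Discrete convexity: `n c^(n-1) (1-c) ≤ 1 - c^n`, i.e. multiplied by c:
`(1-c) * (n * c^n) ≤ c * (1 - c^n)`, strict for n ≥ 2, 0 < c < 1. -/
lemma geom_convex (c : ℝ) (hc0 : 0 < c) (hc1 : c ≤ 1) (n : ℕ) :
    (1 - c) * ((n : ℝ) * c ^ n) ≤ c * (1 - c ^ n) := by
  have h1 : 1 - c ^ n = (1 - c) * ∑ i ∈ Finset.range n, c ^ i := by
    have := geom_sum_mul c n
    ring_nf
    ring_nf at this
    nlinarith [this]
  have h2 : (n : ℝ) * c ^ n ≤ c * ∑ i ∈ Finset.range n, c ^ i := by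
    have : ∀ i ∈ Finset.range n, c ^ n ≤ c * c ^ i := by
      intro i hi
      rw [← pow_succ']
      exact pow_le_pow_of_le_one hc0.le hc1 (by simp at hi; omega)
    calc (n : ℝ) * c ^ n = ∑ _i ∈ Finset.range n, c ^ n := by
          rw [Finset.sum_const, Finset.card_range, nsmul_eq_mul]
      _ ≤ ∑ i ∈ Finset.range n, c * c ^ i := Finset.sum_le_sum this
      _ = c * ∑ i ∈ Finset.range n, c ^ i := by rw [Finset.mul_sum]
  calc (1 - c) * ((n:ℝ) * c ^ n) ≤ (1 - c) * (c * ∑ i ∈ Finset.range n, c ^ i) := by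
        apply mul_le_mul_of_nonneg_left h2 (by linarith)
    _ = c * (1 - c ^ n) := by rw [h1]; ring

lemma geom_convex_strict (c : ℝ) (hc0 : 0 < c) (hc1 : c < 1) (n : ℕ) (hn : 2 ≤ n) :
    (1 - c) * ((n : ℝ) * c ^ n) < c * (1 - c ^ n) := by
  have h1 : 1 - c ^ n = (1 - c) * ∑ i ∈ Finset.range n, c ^ i := by
    have := geom_sum_mul c n
    ring_nf
    ring_nf at this
    nlinarith [this]
  have h2 : (n : ℝ) * c ^ n < c * ∑ i ∈ Finset.range n, c ^ i := by
    have hle : ∀ i ∈ Finset.range n, c ^ n ≤ c * c ^ i := by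
      intro i hi
      rw [← pow_succ']
      exact pow_le_pow_of_le_one hc0.le hc1.le (by simp at hi; omega)
    have hstrict : c ^ n < c * c ^ 0 := by
      rw [pow_zero, mul_one]
      calc c ^ n ≤ c ^ 2 := pow_le_pow_of_le_one hc0.le hc1.le hn
        _ < c := by nlinarith
    calc (n : ℝ) * c ^ n = ∑ _i ∈ Finset.range n, c ^ n := by
          rw [Finset.sum_const, Finset.card_range, nsmul_eq_mul]
      _ < ∑ i ∈ Finset.range n, c * c ^ i := by
          apply Finset.sum_lt_sum hle ⟨0, Finset.mem_range.2 (by omega), hstrict⟩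
      _ = c * ∑ i ∈ Finset.range n, c ^ i := by rw [Finset.mul_sum]
  calc (1 - c) * ((n:ℝ) * c ^ n) < (1 - c) * (c * ∑ i ∈ Finset.range n, c ^ i) := by
        apply mul_lt_mul_of_pos_left h2 (by linarith)
    _ = c * (1 - c ^ n) := by rw [h1]; ring

/-- The main analytic inequality. -/
lemma aux_final (p : ℕ → ℝ) (hp0 : ∀ n, 0 ≤ p n) (hp1 : HasSum p 1)
    (c : ℝ) (hc0 : 0 < c) (hc1 : c < 1)
    (hF : c ≤ ∑' n, p n * c ^ n)
    (j : ℕ) (hj : 2 ≤ j) (hpj : 0 < p j) :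
    (Summable fun n : ℕ => |((n : ℝ) - 1) * p n * c ^ ((n : ℤ) - 1)|) ∧
      (∑' n : ℕ, ((n : ℝ) - 1) * p n * c ^ ((n : ℤ) - 1)) < 0 := by
  have hple : ∀ n, p n ≤ 1 := fun n => le_hasSum hp1 n fun m _ => hp0 m
  have hgeom : Summable (fun n : ℕ => (n : ℝ) * c ^ n) := by
    have := summable_pow_mul_geometric_of_norm_lt_one 1 (r := c)
      (by rw [Real.norm_eq_abs, abs_lt]; constructor <;> linarith)
    simpa using this
  have hgeom0 : Summable (fun n : ℕ => c ^ n) :=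
    summable_geometric_of_lt_one hc0.le hc1
  -- summability of a n = n * p n * c^n and b n = p n * c^n
  have ha : Summable (fun n : ℕ => (n : ℝ) * p n * c ^ n) := by
    apply Summable.of_nonneg_of_le
      (fun n => mul_nonneg (mul_nonneg n.cast_nonneg (hp0 n)) (pow_nonneg hc0.le n))
      (fun n => ?_) hgeom
    calc (n:ℝ) * p n * c ^ n ≤ (n:ℝ) * 1 * c ^ n := by
          apply mul_le_mul_of_nonneg_right _ (by positivity)
          exact mul_le_mul_of_nonneg_left (hple n) (by positivity)
      _ = (n:ℝ) * c ^ n := by ring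
  have hb : Summable (fun n : ℕ => p n * c ^ n) := by
    apply Summable.of_nonneg_of_le (fun n => mul_nonneg (hp0 n) (pow_nonneg hc0.le n)) (fun n => ?_) hgeom0
    calc p n * c ^ n ≤ 1 * c ^ n :=
          mul_le_mul_of_nonneg_right (hple n) (by positivity)
      _ = c ^ n := one_mul _
  set F := ∑' n, p n * c ^ n with hFdef
  have hFle1 : F ≤ 1 := by
    calc F ≤ ∑' n, p n := Summable.tsum_le_tsum (fun n => by
            nlinarith [hp0 n, pow_le_one₀ hc0.le hc1.le (n := n), pow_nonneg hc0.le n])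
          hb hp1.summable
      _ = 1 := hp1.tsum_eq
  -- key strict inequality: (1-c) * ∑ a < c * (1 - F)
  have hkey : (1 - c) * (∑' n : ℕ, (n:ℝ) * p n * c ^ n) < c * (1 - F) := by
    have hsum_left : Summable (fun n : ℕ => (1 - c) * ((n:ℝ) * p n * c ^ n)) :=
      ha.mul_left _
    have hsum_right : Summable (fun n : ℕ => c * (p n - p n * c ^ n)) :=
      ((hp1.summable.sub hb).mul_left c)
    have hlt : ∀ n : ℕ, (1 - c) * ((n:ℝ) * p n * c ^ n) ≤ c * (p n - p n * c ^ n) := by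
      intro n
      have := geom_convex c hc0 hc1.le n
      have h' := mul_le_mul_of_nonneg_left this (hp0 n)
      calc (1 - c) * ((n:ℝ) * p n * c ^ n)
          = p n * ((1 - c) * ((n:ℝ) * c ^ n)) := by ring
        _ ≤ p n * (c * (1 - c ^ n)) := h'
        _ = c * (p n - p n * c ^ n) := by ring
    have hstrictj : (1 - c) * ((j:ℝ) * p j * c ^ j) < c * (p j - p j * c ^ j) := by
      have := geom_convex_strict c hc0 hc1 j hj
      have h' := mul_lt_mul_of_pos_left this hpj
      calc (1 - c) * ((j:ℝ) * p j * c ^ j)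
          = p j * ((1 - c) * ((j:ℝ) * c ^ j)) := by ring
        _ < p j * (c * (1 - c ^ j)) := h'
        _ = c * (p j - p j * c ^ j) := by ring
    calc (1 - c) * (∑' n : ℕ, (n:ℝ) * p n * c ^ n)
        = ∑' n : ℕ, (1 - c) * ((n:ℝ) * p n * c ^ n) := (tsum_mul_left).symm
      _ < ∑' n : ℕ, c * (p n - p n * c ^ n) :=
          Summable.tsum_lt_tsum (i := j) hlt hstrictj hsum_left hsum_right
      _ = c * ∑' n : ℕ, (p n - p n * c ^ n) := tsum_mul_left
      _ = c * (1 - F) := by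
          rw [Summable.tsum_sub hp1.summable hb, hp1.tsum_eq]
  -- hence ∑ a < F
  have hGF : (∑' n : ℕ, (n:ℝ) * p n * c ^ n) < F := by
    have h1c : 0 < 1 - c := by linarith
    rw [← mul_lt_mul_iff_right₀ h1c]
    calc (1 - c) * (∑' n : ℕ, (n:ℝ) * p n * c ^ n) < c * (1 - F) := hkey
      _ ≤ F * (1 - F) := mul_le_mul_of_nonneg_right hF (by linarith)
      _ ≤ (1 - c) * F := by nlinarith
  -- u n := ((n:ℝ) - 1) * p n * c ^ n ; ∑ u < 0
  have hu : Summable (fun n : ℕ => ((n:ℝ) - 1) * p n * c ^ n) := by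
    have : (fun n : ℕ => ((n:ℝ) - 1) * p n * c ^ n)
        = fun n : ℕ => (n:ℝ) * p n * c ^ n - p n * c ^ n := by
      funext n; ring
    rw [this]; exact ha.sub hb
  have husum : (∑' n : ℕ, ((n:ℝ) - 1) * p n * c ^ n) < 0 := by
    have : (fun n : ℕ => ((n:ℝ) - 1) * p n * c ^ n)
        = fun n : ℕ => (n:ℝ) * p n * c ^ n - p n * c ^ n := by
      funext n; ring
    rw [this, Summable.tsum_sub ha hb]
    linarith
  -- relate t to u : t n = u n * c⁻¹
  have hzpow : ∀ n : ℕ, (c : ℝ) ^ ((n : ℤ) - 1) = c ^ n * c⁻¹ := by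
    intro n
    rw [zpow_sub₀ hc0.ne', zpow_natCast, zpow_one]
    rfl
  have hteq : (fun n : ℕ => ((n : ℝ) - 1) * p n * c ^ ((n : ℤ) - 1))
      = fun n : ℕ => (((n:ℝ) - 1) * p n * c ^ n) * c⁻¹ := by
    funext n; rw [hzpow n]; ring
  constructor
  · have h1 : Summable fun n : ℕ => |(((n:ℝ) - 1) * p n * c ^ n) * c⁻¹| :=
      (hu.mul_right _).abs
    refine h1.congr fun n => ?_
    rw [hzpow n]; ring_nf
  · have h2 : (∑' n : ℕ, ((n : ℝ) - 1) * p n * c ^ ((n : ℤ) - 1))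
        = ∑' n : ℕ, (((n:ℝ) - 1) * p n * c ^ n) * c⁻¹ := by
      apply tsum_congr; intro n; rw [hzpow n]; ring
    rw [h2, tsum_mul_right]
    exact mul_neg_of_neg_of_pos husum (by positivity)

/-- Upper Bernoulli: (1-ε)^n ≤ 1 - nε + n²ε² for ε ∈ [0,1]. -/
lemma bernoulli_upper (ε : ℝ) (h0 : 0 ≤ ε) (h1 : ε ≤ 1) :
    ∀ n : ℕ, (1 - ε) ^ n ≤ 1 - n * ε + (n:ℝ)^2 * ε^2 := by
  intro n
  induction n with
  | zero => simp
  | succ n ih =>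
    have hnn : (0:ℝ) ≤ 1 - ε := by linarith
    have h2 : (1 - ε) ^ (n+1) = (1 - ε)^n * (1 - ε) := by ring
    rw [h2]
    have h3 : (1 - ε)^n * (1 - ε) ≤ (1 - n * ε + (n:ℝ)^2 * ε^2) * (1 - ε) :=
      mul_le_mul_of_nonneg_right ih hnn
    have hcast : ((n:ℝ) + 1) = ((n+1 : ℕ) : ℝ) := by push_cast; ring
    calc (1 - ε)^n * (1 - ε) ≤ (1 - n * ε + (n:ℝ)^2 * ε^2) * (1 - ε) := h3
      _ ≤ 1 - ((n+1 : ℕ):ℝ) * ε + (((n+1:ℕ)):ℝ)^2 * ε^2 := by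
        push_cast
        nlinarith [sq_nonneg ε, sq_nonneg ((n:ℝ)*ε), mul_nonneg (mul_nonneg (sq_nonneg (n:ℝ)) h0) (sq_nonneg ε)]

set_option maxHeartbeats 1000000 in
/-- Existence of s ∈ (0,1) with F(s) ≤ s, given a positive truncated mean. -/
lemma exists_subfixed (p : ℕ → ℝ) (hp0 : ∀ n, 0 ≤ p n) (hp1 : HasSum p 1)
    (N : ℕ) (hN : 0 < ∑ n ∈ Finset.range (N+1), ((n:ℝ) - 1) * p n) :
    ∃ s : ℝ, 0 < s ∧ s < 1 ∧ (∑' n : ℕ, p n * s ^ n) ≤ s := by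
  set δ := ∑ n ∈ Finset.range (N+1), ((n:ℝ) - 1) * p n with hδ
  set P := ∑ n ∈ Finset.range (N+1), p n with hP
  have hP0 : 0 ≤ P := Finset.sum_nonneg fun n _ => hp0 n
  have hP1 : P ≤ 1 := sum_le_hasSum (Finset.range (N+1)) (fun n _ => hp0 n) hp1
  set ε : ℝ := min (δ / (2 * ((N:ℝ)+2)^2)) (1/2) with hε
  have hε0 : 0 < ε := by
    apply lt_min
    · apply div_pos hN; positivity
    · norm_num
  have hε1 : ε ≤ 1/2 := min_le_right _ _
  have hεδ : ((N:ℝ)+2)^2 * ε ≤ δ / 2 := by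
    have : ε ≤ δ / (2 * ((N:ℝ)+2)^2) := min_le_left _ _
    have hpos : (0:ℝ) < ((N:ℝ)+2)^2 := by positivity
    calc ((N:ℝ)+2)^2 * ε ≤ ((N:ℝ)+2)^2 * (δ / (2 * ((N:ℝ)+2)^2)) :=
          mul_le_mul_of_nonneg_left this hpos.le
      _ = δ / 2 := by field_simp
  set s : ℝ := 1 - ε with hs
  have hs0 : 0 < s := by simp only [hs]; linarith
  have hs1 : s < 1 := by simp only [hs]; linarith
  clear_value δ P ε s
  refine ⟨s, hs0, hs1, ?_⟩
  -- summability
  have hple : ∀ n, p n ≤ 1 := fun n => le_hasSum hp1 n fun m _ => hp0 m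
  have hsumF : Summable (fun n : ℕ => p n * s ^ n) := by
    apply Summable.of_nonneg_of_le (fun n => mul_nonneg (hp0 n) (pow_nonneg hs0.le n))
      (fun n => ?_) (summable_geometric_of_lt_one hs0.le hs1)
    calc p n * s ^ n ≤ 1 * s ^ n := mul_le_mul_of_nonneg_right (hple n) (pow_nonneg hs0.le n)
      _ = s ^ n := one_mul _
  -- split: F(s) = head + tail
  have hsplit : (∑ n ∈ Finset.range (N+1), p n * s ^ n)
      + (∑' m : ℕ, p (m + (N+1)) * s ^ (m + (N+1))) = ∑' n : ℕ, p n * s ^ n :=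
    Summable.sum_add_tsum_nat_add (N+1) hsumF
  -- tail bound
  have htail_sum : Summable (fun m : ℕ => p (m + (N+1))) :=
    ((summable_nat_add_iff (f := p) (N+1)).2 hp1.summable)
  have htail_val : (∑' m : ℕ, p (m + (N+1))) = 1 - P := by
    have := Summable.sum_add_tsum_nat_add (N+1) hp1.summable
    rw [hp1.tsum_eq] at this
    linarith [this]
  have htail : (∑' m : ℕ, p (m + (N+1)) * s ^ (m + (N+1))) ≤ (1 - P) * s ^ (N+1) := by
    have hsumF' : Summable (fun m : ℕ => p (m + (N+1)) * s ^ (m + (N+1))) :=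
      (summable_nat_add_iff (f := fun n : ℕ => p n * s ^ n) (N+1)).2 hsumF
    calc (∑' m : ℕ, p (m + (N+1)) * s ^ (m + (N+1)))
        ≤ ∑' m : ℕ, p (m + (N+1)) * s ^ (N+1) := by
          refine Summable.tsum_le_tsum (fun m => ?_) hsumF' (htail_sum.mul_right _)
          apply mul_le_mul_of_nonneg_left _ (hp0 _)
          exact pow_le_pow_of_le_one hs0.le hs1.le (by omega)
      _ = (∑' m : ℕ, p (m + (N+1))) * s ^ (N+1) := tsum_mul_right
      _ = (1 - P) * s ^ (N+1) := by rw [htail_val]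
  -- head bound via bernoulli
  have hhead : (∑ n ∈ Finset.range (N+1), p n * s ^ n)
      ≤ ∑ n ∈ Finset.range (N+1), p n * (1 - n * ε + ((N:ℝ)+2)^2 * ε^2) := by
    apply Finset.sum_le_sum
    intro n hn
    apply mul_le_mul_of_nonneg_left _ (hp0 n)
    have hb := bernoulli_upper ε hε0.le (by linarith) n
    have : (n:ℝ)^2 ≤ ((N:ℝ)+2)^2 := by
      have : (n:ℝ) ≤ (N:ℝ)+2 := by
        simp only [Finset.mem_range] at hn
        push_cast
        have : (n:ℝ) ≤ N := by exact_mod_cast Nat.lt_succ_iff.1 hn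
        linarith
      nlinarith [n.cast_nonneg (α := ℝ)]
    rw [hs]
    calc (1-ε) ^ n ≤ 1 - n * ε + (n:ℝ)^2 * ε^2 := hb
      _ ≤ 1 - n * ε + ((N:ℝ)+2)^2 * ε^2 := by nlinarith [sq_nonneg ε]
  have htailpt : (1 - P) * s ^ (N+1) ≤ (1 - P) * (1 - ((N:ℝ)+1) * ε + ((N:ℝ)+2)^2 * ε^2) := by
    apply mul_le_mul_of_nonneg_left _ (by linarith)
    have hb := bernoulli_upper ε hε0.le (by linarith) (N+1)
    have h2 : ((N+1:ℕ):ℝ)^2 ≤ ((N:ℝ)+2)^2 := by push_cast; nlinarith [N.cast_nonneg (α := ℝ)]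
    rw [hs]
    calc (1-ε) ^ (N+1) ≤ 1 - ((N+1:ℕ):ℝ) * ε + ((N+1:ℕ):ℝ)^2 * ε^2 := hb
      _ ≤ 1 - ((N:ℝ)+1) * ε + ((N:ℝ)+2)^2 * ε^2 := by push_cast; nlinarith [sq_nonneg ε, N.cast_nonneg (α := ℝ)]
  -- combine
  have hcomb : (∑' n : ℕ, p n * s ^ n)
      ≤ ∑ n ∈ Finset.range (N+1), p n * (1 - n * ε + ((N:ℝ)+2)^2 * ε^2)
        + (1 - P) * (1 - ((N:ℝ)+1) * ε + ((N:ℝ)+2)^2 * ε^2) := by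
    rw [← hsplit]
    have := add_le_add hhead (le_trans htail htailpt)
    linarith
  -- evaluate head sum
  have hhead_eval : ∑ n ∈ Finset.range (N+1), p n * (1 - n * ε + ((N:ℝ)+2)^2 * ε^2)
      = P - ε * (∑ n ∈ Finset.range (N+1), (n:ℝ) * p n) + ((N:ℝ)+2)^2 * ε^2 * P := by
    rw [hP, Finset.mul_sum, Finset.mul_sum, ← Finset.sum_sub_distrib, ← Finset.sum_add_distrib]
    apply Finset.sum_congr rfl
    intro n _; ring
  have hnp : ∑ n ∈ Finset.range (N+1), (n:ℝ) * p n = δ + P := by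
    rw [hδ, hP, ← Finset.sum_add_distrib]
    apply Finset.sum_congr rfl
    intro n _; ring
  -- final arithmetic
  have hK : ((N:ℝ)+2)^2 * ε^2 ≤ δ / 2 * ε := by
    calc ((N:ℝ)+2)^2 * ε^2 = (((N:ℝ)+2)^2 * ε) * ε := by ring
      _ ≤ (δ/2) * ε := mul_le_mul_of_nonneg_right hεδ hε0.le
  have hA : 1 + δ ≤ δ + P + ((N:ℝ)+1) * (1 - P) := by nlinarith [N.cast_nonneg (α := ℝ)]
  calc (∑' n : ℕ, p n * s ^ n)
      ≤ P - ε * (δ + P) + ((N:ℝ)+2)^2 * ε^2 * P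
        + (1 - P) * (1 - ((N:ℝ)+1) * ε + ((N:ℝ)+2)^2 * ε^2) := by
        rw [← hnp, ← hhead_eval]; exact hcomb
    _ = 1 - ε * (δ + P + ((N:ℝ)+1)*(1-P)) + ((N:ℝ)+2)^2 * ε^2 * (P + (1-P)) := by ring
    _ ≤ 1 - ε * (1 + δ) + δ/2 * ε := by nlinarith [mul_le_mul_of_nonneg_left hA hε0.le, hK]
    _ ≤ s := by rw [hs]; nlinarith [mul_pos hε0 hN]


lemma aux_hitting_le {Ω : Type*} [MeasurableSpace Ω] (μ : Measure Ω)
    [IsProbabilityMeasure μ] (X : ℕ → Ω → ℤ)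
    (hmeas : ∀ n, Measurable (X n))
    (hindep : iIndepFun X μ)
    (hident : ∀ n, IdentDistrib (X n) (X 0) μ μ)
    (hskip : ∀ᵐ ω ∂μ, -1 ≤ X 0 ω)
    (r : ℝ≥0∞) (hr0 : r ≠ 0) (hrtop : r ≠ ⊤) (hr1 : r ≤ 1)
    (hF : ∑' n : ℕ, r ^ n * μ {ω | X 0 ω = (n:ℤ) - 1} ≤ r) :
    μ {ω | ∃ m : ℕ, ∑ l ∈ Finset.range m, X l ω = -1} ≤ r := by
  classical
  set S : ℕ → Ω → ℤ := fun m ω => ∑ l ∈ Finset.range m, X l ω with hS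
  have hSmeas : ∀ m, Measurable (S m) :=
    fun m => Finset.measurable_sum _ (fun l _ => hmeas l)
  set A : ℕ → Set Ω := fun n => {ω | ∃ m ≤ n, S m ω = -1} with hA
  have hAmeas : ∀ n, MeasurableSet (A n) := by
    intro n
    have : A n = ⋃ m, ⋃ (_ : m ≤ n), S m ⁻¹' {-1} := by
      ext ω; simp [hA, Set.mem_iUnion]
    rw [this]
    exact MeasurableSet.iUnion fun m => MeasurableSet.iUnion fun _ =>
      (hSmeas m) (measurableSet_singleton _)
  have hAmono : Monotone A := by
    intro a b hab ω ⟨m, hm, hSm⟩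
    exact ⟨m, le_trans hm hab, hSm⟩
  set W : ℕ → Ω → ℝ≥0∞ := fun n ω => if ω ∈ A n then 1 else r ^ (S n ω + 1).toNat with hW
  have hWmeas : ∀ n, Measurable (W n) := by
    intro n
    exact Measurable.ite (hAmeas n) measurable_const
      ((measurable_of_countable (fun k : ℤ => r ^ (k+1).toNat)).comp (hSmeas n))
  have hWle : ∀ n ω, W n ω ≤ 1 := by
    intro n ω
    simp only [hW]
    split
    · exact le_rfl
    · exact pow_le_one' hr1 _
  -- a.e. all increments are ≥ -1
  have hgood : ∀ᵐ ω ∂μ, ∀ n, -1 ≤ X n ω := by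
    rw [ae_all_iff]
    intro n
    have hB : MeasurableSet {k : ℤ | k < -1} := (Set.to_countable _).measurableSet
    have h1 : μ (X n ⁻¹' {k : ℤ | k < -1}) = μ (X 0 ⁻¹' {k : ℤ | k < -1}) :=
      (hident n).measure_mem_eq hB
    have h2 : μ (X 0 ⁻¹' {k : ℤ | k < -1}) = 0 := by
      rw [ae_iff] at hskip
      convert hskip using 2
      ext ω; simp [not_le]
    filter_upwards [measure_eq_zero_iff_ae_notMem.1 (h1.trans h2)] with ω hω
    simpa [not_lt] using hω
  set g : ℤ → ℝ≥0∞ := fun k => r ^ (k+1).toNat * r⁻¹ with hg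
  -- expectation of g (X n) is at most 1
  have hgint : ∀ n, ∫⁻ ω, g (X n ω) ∂μ ≤ 1 := by
    intro n
    have h1 : ∫⁻ ω, g (X n ω) ∂μ = ∫⁻ k, g k ∂(Measure.map (X n) μ) :=
      (lintegral_map (measurable_of_countable g) (hmeas n)).symm
    rw [h1, (hident n).map_eq, lintegral_countable']
    -- reindex sum over ℤ to ℕ
    have hinj : Function.Injective (fun n : ℕ => (n : ℤ) - 1) := by
      intro a b hab; simpa using hab
    have hsupp : Function.support (fun k : ℤ => g k * (Measure.map (X 0) μ) {k})
        ⊆ Set.range (fun n : ℕ => (n : ℤ) - 1) := by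
      intro k hk
      rcases le_or_gt (-1) k with h | h
      · exact ⟨(k + 1).toNat, show ((k + 1).toNat : ℤ) - 1 = k by omega⟩
      · exfalso
        apply hk
        have : (Measure.map (X 0) μ) {k} = 0 := by
          rw [Measure.map_apply (hmeas 0) (measurableSet_singleton _)]
          apply measure_mono_null (t := {ω | X 0 ω < -1}) _ _
          · intro ω hω
            simp only [Set.mem_preimage, Set.mem_singleton_iff] at hω
            simp [Set.mem_setOf_eq, hω, h]
          · rw [ae_iff] at hskip
            convert hskip using 2
            ext ω; simp [not_le]
        simp [this]
    rw [← Function.Injective.tsum_eq hinj hsupp]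
    have hterm : ∀ n : ℕ, g ((n : ℤ) - 1) * (Measure.map (X 0) μ) {(n : ℤ) - 1}
        = r ^ n * r⁻¹ * μ {ω | X 0 ω = (n:ℤ) - 1} := by
      intro m
      have h2 : ((m : ℤ) - 1 + 1).toNat = m := by omega
      have h3 : (Measure.map (X 0) μ) {(m : ℤ) - 1} = μ {ω | X 0 ω = (m:ℤ) - 1} := by
        rw [Measure.map_apply (hmeas 0) (measurableSet_singleton _)]
        rfl
      rw [hg]; simp only [h2, h3]
    calc (∑' n : ℕ, g ((n : ℤ) - 1) * (Measure.map (X 0) μ) {(n : ℤ) - 1})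
        = ∑' n : ℕ, r⁻¹ * (r ^ n * μ {ω | X 0 ω = (n:ℤ) - 1}) := by
          apply tsum_congr; intro m; rw [hterm m]; ring
      _ = r⁻¹ * ∑' n : ℕ, r ^ n * μ {ω | X 0 ω = (n:ℤ) - 1} := ENNReal.tsum_mul_left
      _ ≤ r⁻¹ * r := mul_le_mul_right hF _
      _ = 1 := ENNReal.inv_mul_cancel hr0 hrtop
  -- pointwise step identity
  have hstep : ∀ ω, (∀ l, -1 ≤ X l ω) → ∀ n,
      W (n+1) ω = (A n).indicator (W n) ω + (A n)ᶜ.indicator (W n) ω * g (X n ω) := by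
    intro ω hω n
    by_cases hAn : ω ∈ A n
    · have hAn1 : ω ∈ A (n+1) := hAmono (Nat.le_succ n) hAn
      simp [hW, hAn, hAn1, Set.indicator_of_mem, Set.indicator_of_notMem,
        Set.notMem_compl_iff.2 hAn]
    · have hpos : ∀ m, m ≤ n → 0 ≤ S m ω := by
        intro m hm
        induction m with
        | zero => simp [hS]
        | succ k ih =>
          have hk : 0 ≤ S k ω := ih (by omega)
          have h1 : S (k+1) ω = S k ω + X k ω := by
            simp [hS, Finset.sum_range_succ]
          have h2 : -1 ≤ X k ω := hω k
          by_contra hneg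
          push_neg at hneg
          have : S (k+1) ω = -1 := by omega
          exact hAn ⟨k+1, hm, this⟩
      have hSn : 0 ≤ S n ω := hpos n le_rfl
      have hS1 : S (n+1) ω = S n ω + X n ω := by simp [hS, Finset.sum_range_succ]
      have hXn : -1 ≤ X n ω := hω n
      have hWn : W n ω = r ^ (S n ω + 1).toNat := if_neg hAn
      rw [Set.indicator_of_notMem hAn, Set.indicator_of_mem (Set.mem_compl hAn), hWn,
        zero_add]
      by_cases hAn1 : ω ∈ A (n+1)
      · obtain ⟨m, hm, hSm⟩ := hAn1
        have hmeq : m = n+1 := by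
          by_contra h
          exact hAn ⟨m, by omega, hSm⟩
        subst hmeq
        have h4 : S n ω = 0 ∧ X n ω = -1 := by constructor <;> omega
        have hLHS : W (n+1) ω = 1 := if_pos ⟨n+1, le_rfl, hSm⟩
        rw [hLHS, hg]
        simp only [h4.1, h4.2]
        norm_num
        exact (ENNReal.mul_inv_cancel hr0 hrtop).symm
      · have h2 : 0 ≤ S (n+1) ω := by
          by_contra h
          push_neg at h
          have : S (n+1) ω = -1 := by omega
          exact hAn1 ⟨n+1, le_rfl, this⟩
        have hLHS : W (n+1) ω = r ^ (S (n+1) ω + 1).toNat := if_neg hAn1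
        have hexp : (S n ω + 1).toNat + (X n ω + 1).toNat = (S (n+1) ω + 1).toNat + 1 := by
          omega
        rw [hLHS, hg]
        calc r ^ (S (n+1) ω + 1).toNat
            = r ^ ((S (n+1) ω + 1).toNat + 1) * r⁻¹ := by
              rw [pow_succ, mul_assoc, ENNReal.mul_inv_cancel hr0 hrtop, mul_one]
          _ = r ^ ((S n ω + 1).toNat + (X n ω + 1).toNat) * r⁻¹ := by rw [hexp]
          _ = r ^ (S n ω + 1).toNat * (r ^ (X n ω + 1).toNat * r⁻¹) := by
              rw [pow_add, mul_assoc]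
  -- supermartingale property
  have hsuper : ∀ n, ∫⁻ ω, W (n+1) ω ∂μ ≤ ∫⁻ ω, W n ω ∂μ := by
    intro n
    have hstep_ae : W (n+1) =ᵐ[μ]
        fun ω => (A n).indicator (W n) ω + (A n)ᶜ.indicator (W n) ω * g (X n ω) := by
      filter_upwards [hgood] with ω hω
      exact hstep ω hω n
    rw [lintegral_congr_ae hstep_ae]
    have hind_meas : Measurable ((A n).indicator (W n)) :=
      (hWmeas n).indicator (hAmeas n)
    have hindc_meas : Measurable ((A n)ᶜ.indicator (W n)) :=
      (hWmeas n).indicator (hAmeas n).compl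
    rw [lintegral_add_left hind_meas]
    -- independence
    have hYindep : IndepFun ((A n)ᶜ.indicator (W n)) (fun ω => g (X n ω)) μ := by
      have hdisj : Disjoint (Finset.range n) ({n} : Finset ℕ) := by
        simp [Finset.disjoint_singleton_right]
      have hbase := hindep.indepFun_finset (Finset.range n) {n} hdisj hmeas
      set φ : ({ x // x ∈ Finset.range n } → ℤ) → ℝ≥0∞ := fun v =>
        if (∃ m ≤ n, (∑ l ∈ Finset.range m,
            (if h : l ∈ Finset.range n then v ⟨l, h⟩ else 0)) = -1) then 0
        else r ^ ((∑ l ∈ Finset.range n,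
            (if h : l ∈ Finset.range n then v ⟨l, h⟩ else 0)) + 1).toNat with hφ
      set ψ : ({ x // x ∈ ({n} : Finset ℕ) } → ℤ) → ℝ≥0∞ := fun v =>
        g (v ⟨n, Finset.mem_singleton_self n⟩) with hψ
      have hYeq : (A n)ᶜ.indicator (W n) = φ ∘ (fun a (i : Finset.range n) => X i a) := by
        funext ω
        have hsum : ∀ m, m ≤ n → (∑ l ∈ Finset.range m,
            (if h : l ∈ Finset.range n then X l ω else 0)) = S m ω := by
          intro m hm
          apply Finset.sum_congr rfl
          intro l hl
          rw [dif_pos]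
          simp only [Finset.mem_range] at hl ⊢
          omega
        by_cases hAn : ω ∈ A n
        · rw [Set.indicator_of_notMem (by simpa using hAn)]
          simp only [Function.comp_apply, hφ]
          rw [if_pos]
          obtain ⟨m, hm, hSm⟩ := hAn
          exact ⟨m, hm, by rw [hsum m hm]; exact hSm⟩
        · rw [Set.indicator_of_mem (Set.mem_compl hAn)]
          simp only [Function.comp_apply, hφ]
          rw [if_neg, hsum n le_rfl]
          · exact if_neg hAn
          · rintro ⟨m, hm, hSm⟩
            rw [hsum m hm] at hSm
            exact hAn ⟨m, hm, hSm⟩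
      have hgeq : (fun ω => g (X n ω)) = ψ ∘ (fun a (i : ({n} : Finset ℕ)) => X i a) := rfl
      rw [hYeq, hgeq]
      exact hbase.comp (measurable_of_countable φ) (measurable_of_countable ψ)
    have hmul : ∫⁻ ω, (A n)ᶜ.indicator (W n) ω * g (X n ω) ∂μ
        = (∫⁻ ω, (A n)ᶜ.indicator (W n) ω ∂μ) * ∫⁻ ω, g (X n ω) ∂μ :=
      lintegral_mul_eq_lintegral_mul_lintegral_of_indepFun''
        hindc_meas.aemeasurable
        ((measurable_of_countable g).comp (hmeas n)).aemeasurable hYindep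
    rw [hmul]
    calc (∫⁻ ω, (A n).indicator (W n) ω ∂μ)
          + (∫⁻ ω, (A n)ᶜ.indicator (W n) ω ∂μ) * ∫⁻ ω, g (X n ω) ∂μ
        ≤ (∫⁻ ω, (A n).indicator (W n) ω ∂μ)
          + (∫⁻ ω, (A n)ᶜ.indicator (W n) ω ∂μ) * 1 :=
          add_le_add_right (mul_le_mul_right (hgint n) _) _
      _ = ∫⁻ ω, ((A n).indicator (W n) ω + (A n)ᶜ.indicator (W n) ω) ∂μ := by
          rw [mul_one, ← lintegral_add_left hind_meas]
      _ = ∫⁻ ω, W n ω ∂μ := by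
          apply lintegral_congr
          intro ω
          exact congrFun (Set.indicator_self_add_compl (A n) (W n)) ω
  -- base case
  have hbase0 : ∫⁻ ω, W 0 ω ∂μ = r := by
    have : W 0 = fun _ => r := by
      funext ω
      have h1 : ω ∉ A 0 := by
        rintro ⟨m, hm, hSm⟩
        interval_cases m
        simp [hS] at hSm
      rw [hW]
      simp only [h1, if_neg, if_false]
      have : S 0 ω = 0 := by simp [hS]
      rw [this]
      norm_num
    rw [this, lintegral_const, measure_univ, mul_one]
  have hWbound : ∀ n, ∫⁻ ω, W n ω ∂μ ≤ r := by
    intro n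
    induction n with
    | zero => rw [hbase0]
    | succ k ih => exact le_trans (hsuper k) ih
  -- measure bound
  have hAbound : ∀ n, μ (A n) ≤ r := by
    intro n
    have h1 : μ (A n) = ∫⁻ ω, (A n).indicator (fun _ => (1:ℝ≥0∞)) ω ∂μ :=
      (lintegral_indicator_one (hAmeas n)).symm
    rw [h1]
    refine le_trans (lintegral_mono fun ω => ?_) (hWbound n)
    by_cases hmem : ω ∈ A n
    · rw [Set.indicator_of_mem hmem]
      rw [hW]; simp [hmem]
    · rw [Set.indicator_of_notMem hmem]
      exact zero_le
  -- conclude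
  have hU : {ω | ∃ m : ℕ, ∑ l ∈ Finset.range m, X l ω = -1} = ⋃ n, A n := by
    ext ω
    simp only [Set.mem_setOf_eq, Set.mem_iUnion, hA]
    constructor
    · rintro ⟨m, hm⟩
      exact ⟨m, m, le_rfl, hm⟩
    · rintro ⟨n, m, _, hm⟩
      exact ⟨m, hm⟩
  rw [hU, Directed.measure_iUnion (hAmono.directed_le)]
  exact iSup_le hAbound

/-- bridge from real series to ENNReal series -/
lemma bridge_tsum (q : ℕ → ℝ≥0∞) (hq : ∀ n, q n ≠ ⊤) (s : ℝ) (hs : 0 ≤ s)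
    (hsum : Summable (fun n : ℕ => (q n).toReal * s ^ n)) :
    ∑' n : ℕ, (ENNReal.ofReal s) ^ n * q n
      = ENNReal.ofReal (∑' n : ℕ, (q n).toReal * s ^ n) := by
  rw [ENNReal.ofReal_tsum_of_nonneg
    (fun n => mul_nonneg ENNReal.toReal_nonneg (pow_nonneg hs n)) hsum]
  apply tsum_congr
  intro n
  rw [ENNReal.ofReal_mul ENNReal.toReal_nonneg, ENNReal.ofReal_toReal (hq n),
    ENNReal.ofReal_pow hs, mul_comm]

lemma summable_pF (p : ℕ → ℝ) (hple : ∀ n, 0 ≤ p n ∧ p n ≤ 1) (s : ℝ)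
    (hs0 : 0 ≤ s) (hs1 : s < 1) : Summable (fun n : ℕ => p n * s ^ n) := by
  apply Summable.of_nonneg_of_le (fun n => mul_nonneg (hple n).1 (pow_nonneg hs0 n))
    (fun n => ?_) (summable_geometric_of_lt_one hs0 hs1)
  calc p n * s ^ n ≤ 1 * s ^ n :=
        mul_le_mul_of_nonneg_right (hple n).2 (pow_nonneg hs0 n)
    _ = s ^ n := one_mul _

/-- For a skip-free to the left random walk with `ℙ[X_0 = -1] > 0` whose mean exists and
lies in `(0, ∞]`, the Doob `h`-transformed increment distribution `k ↦ ℙ[X_0 = k] c^k`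
(for `k ≥ -1`, reindexed by `k = n - 1`, `n : ℕ`) has strictly negative mean: the series
`∑_{k=-1}^∞ k ℙ[X_0 = k] c^k` converges absolutely and its sum is `< 0`, where
`c = ℙ[∃ n, S_n = -1]`. -/
theorem doob_transform_neg_mean {Ω : Type*} [MeasurableSpace Ω] (μ : Measure Ω)
    [IsProbabilityMeasure μ] (X : ℕ → Ω → ℤ)
    (hmeas : ∀ n, Measurable (X n))
    (hindep : iIndepFun X μ)
    (hident : ∀ n, IdentDistrib (X n) (X 0) μ μ)
    (hskip : ∀ᵐ ω ∂μ, -1 ≤ X 0 ω)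
    (hminus : 0 < μ {ω | X 0 ω = -1})
    (hnegpart : Integrable (fun ω => max (-(X 0 ω : ℝ)) 0) μ)
    (hmean : ¬ Integrable (fun ω => (X 0 ω : ℝ)) μ ∨ 0 < ∫ ω, (X 0 ω : ℝ) ∂μ) :
    (Summable fun n : ℕ =>
        |((n : ℝ) - 1) * (μ {ω | X 0 ω = (n : ℤ) - 1}).toReal *
          (μ {ω | ∃ m : ℕ, ∑ l ∈ Finset.range m, X l ω = -1}).toReal ^ ((n : ℤ) - 1)|) ∧
      (∑' n : ℕ,
          ((n : ℝ) - 1) * (μ {ω | X 0 ω = (n : ℤ) - 1}).toReal *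
            (μ {ω | ∃ m : ℕ, ∑ l ∈ Finset.range m, X l ω = -1}).toReal ^ ((n : ℤ) - 1))
        < 0 := by
  classical
  set q : ℕ → ℝ≥0∞ := fun n => μ {ω | X 0 ω = (n : ℤ) - 1} with hq
  set p : ℕ → ℝ := fun n => (q n).toReal with hp
  have hq_ne_top : ∀ n, q n ≠ ⊤ := fun n => measure_ne_top μ _
  have hp0 : ∀ n, 0 ≤ p n := fun n => ENNReal.toReal_nonneg
  -- pushforward measure
  have hsing : ∀ k : ℤ, k < -1 → μ {ω | X 0 ω = k} = 0 := by
    intro k hk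
    rw [ae_iff] at hskip
    apply measure_mono_null _ hskip
    intro ω hω
    simp only [Set.mem_setOf_eq] at hω ⊢
    omega
  -- total mass 1 (ENNReal)
  have hqtot : ∑' n : ℕ, q n = 1 := by
    have h1 : ∑' k : ℤ, μ {ω | X 0 ω = k} = 1 := by
      have h2 : ∫⁻ k, 1 ∂(Measure.map (X 0) μ) = 1 := by
        rw [lintegral_one]
        have : IsProbabilityMeasure (Measure.map (X 0) μ) :=
          Measure.isProbabilityMeasure_map (hmeas 0).aemeasurable
        exact measure_univ
      rw [lintegral_countable'] at h2
      rw [← h2]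
      apply tsum_congr
      intro k
      rw [one_mul, Measure.map_apply (hmeas 0) (measurableSet_singleton _)]
      rfl
    rw [← h1]
    have hinj : Function.Injective (fun n : ℕ => (n : ℤ) - 1) := by
      intro a b hab; simpa using hab
    have hsupp : Function.support (fun k : ℤ => μ {ω | X 0 ω = k})
        ⊆ Set.range (fun n : ℕ => (n : ℤ) - 1) := by
      intro k hk
      rcases le_or_gt (-1) k with h | h
      · exact ⟨(k + 1).toNat, show ((k + 1).toNat : ℤ) - 1 = k by omega⟩
      · exact absurd (hsing k h) hk
    exact Function.Injective.tsum_eq hinj hsupp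
  have hp1 : HasSum p 1 := by
    have hne : ∑' n, q n ≠ ⊤ := by rw [hqtot]; exact ENNReal.one_ne_top
    have h3 := (ENNReal.summable_toReal hne).hasSum
    have h4 : ∑' (b : ℕ), (q b).toReal = 1 := by
      rw [← ENNReal.tsum_toReal_eq hq_ne_top, hqtot, ENNReal.toReal_one]
    rwa [h4] at h3
  have hple : ∀ n, 0 ≤ p n ∧ p n ≤ 1 :=
    fun n => ⟨hp0 n, le_hasSum hp1 n fun m _ => hp0 m⟩
  -- the hitting lemma, real form
  have hhit : ∀ s : ℝ, 0 < s → s < 1 → (∑' n : ℕ, p n * s ^ n) ≤ s →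
      μ {ω | ∃ m : ℕ, ∑ l ∈ Finset.range m, X l ω = -1} ≤ ENNReal.ofReal s := by
    intro s hs0 hs1 hFs
    apply aux_hitting_le μ X hmeas hindep hident hskip
    · simp [ENNReal.ofReal_eq_zero, not_le, hs0]
    · exact ENNReal.ofReal_ne_top
    · exact ENNReal.ofReal_le_one.2 hs1.le
    · rw [bridge_tsum q hq_ne_top s hs0.le (summable_pF p hple s hs0.le hs1)]
      exact ENNReal.ofReal_le_ofReal hFs
  have hmeasR : Measurable (fun ω => (X 0 ω : ℝ)) :=
    (measurable_of_countable (fun k : ℤ => (k:ℝ))).comp (hmeas 0)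
  -- positive truncated mean exists
  have hN : ∃ N : ℕ, 0 < ∑ n ∈ Finset.range (N+1), ((n:ℝ) - 1) * p n := by
    by_contra hcon
    push_neg at hcon
    -- the ENNReal positive part integral
    set L : ℝ≥0∞ := ∫⁻ ω, ENNReal.ofReal ((X 0 ω : ℝ)) ∂μ with hL
    have hLsum : L = ∑' n : ℕ, ENNReal.ofReal ((n:ℝ) - 1) * q n := by
      rw [hL, ← lintegral_map (measurable_of_countable
        (fun k : ℤ => ENNReal.ofReal ((k:ℝ)))) (hmeas 0), lintegral_countable']
      have hinj : Function.Injective (fun n : ℕ => (n : ℤ) - 1) := by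
        intro a b hab; simpa using hab
      have hsupp : Function.support
          (fun k : ℤ => ENNReal.ofReal ((k:ℝ)) * (Measure.map (X 0) μ) {k})
          ⊆ Set.range (fun n : ℕ => (n : ℤ) - 1) := by
        intro k hk
        rcases le_or_gt (-1) k with h | h
        · exact ⟨(k + 1).toNat, show ((k + 1).toNat : ℤ) - 1 = k by omega⟩
        · exfalso
          apply hk
          have h0 : (Measure.map (X 0) μ) {k} = 0 := by
            rw [Measure.map_apply (hmeas 0) (measurableSet_singleton _)]
            exact hsing k h
          simp [h0]
      rw [← Function.Injective.tsum_eq hinj hsupp]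
      apply tsum_congr
      intro n
      have h3 : (Measure.map (X 0) μ) {(n : ℤ) - 1} = q n := by
        rw [Measure.map_apply (hmeas 0) (measurableSet_singleton _)]
        rfl
      rw [h3]
      norm_num
    have hLle : L ≤ ENNReal.ofReal (p 0) := by
      rw [hLsum, ENNReal.tsum_eq_iSup_sum]
      apply iSup_le
      intro t
      rcases Finset.exists_nat_subset_range t with ⟨M, hM⟩
      calc ∑ n ∈ t, ENNReal.ofReal ((n:ℝ) - 1) * q n
          ≤ ∑ n ∈ Finset.range (M+1), ENNReal.ofReal ((n:ℝ) - 1) * q n :=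
            Finset.sum_le_sum_of_subset (hM.trans (by
              apply Finset.range_subset_range.2; omega))
        _ = ∑ i ∈ Finset.range M, ENNReal.ofReal (((i+1:ℕ):ℝ) - 1) * q (i+1) := by
            rw [Finset.sum_range_succ']
            have h0 : ENNReal.ofReal (((0:ℕ):ℝ) - 1) = 0 := by
              rw [ENNReal.ofReal_eq_zero]; norm_num
            rw [h0, zero_mul, add_zero]
        _ = ENNReal.ofReal (∑ i ∈ Finset.range M, (((i+1:ℕ):ℝ) - 1) * p (i+1)) := by
            rw [ENNReal.ofReal_sum_of_nonneg (fun i _ => by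
              apply mul_nonneg _ (hp0 _); push_cast; linarith)]
            apply Finset.sum_congr rfl
            intro i _
            rw [ENNReal.ofReal_mul (by push_cast; linarith),
              ENNReal.ofReal_toReal (hq_ne_top _)]
        _ ≤ ENNReal.ofReal (p 0) := by
            apply ENNReal.ofReal_le_ofReal
            have h5 := hcon M
            rw [Finset.sum_range_succ'] at h5
            have h6 : ((0:ℕ):ℝ) - 1 = -1 := by norm_num
            rw [h6] at h5
            linarith
    -- integrability of the positive part
    have hofReal_max : ∀ x : ℝ, ENNReal.ofReal (max x 0) = ENNReal.ofReal x := by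
      intro x
      rcases le_total x 0 with h | h
      · rw [max_eq_right h, ENNReal.ofReal_zero, eq_comm, ENNReal.ofReal_eq_zero]
        exact h
      · rw [max_eq_left h]
    have hnn : 0 ≤ᵐ[μ] (fun ω => max (X 0 ω : ℝ) 0) :=
      Filter.Eventually.of_forall fun ω => le_max_right _ _
    have hpos_int : Integrable (fun ω => max (X 0 ω : ℝ) 0) μ := by
      constructor
      · exact (hmeasR.max measurable_const).aestronglyMeasurable
      · rw [hasFiniteIntegral_iff_ofReal hnn]
        calc ∫⁻ ω, ENNReal.ofReal (max (X 0 ω : ℝ) 0) ∂μ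
            = L := by
              rw [hL]
              apply lintegral_congr
              intro ω
              exact hofReal_max _
          _ ≤ ENNReal.ofReal (p 0) := hLle
          _ < ⊤ := ENNReal.ofReal_lt_top
    have hXeq : (fun ω => (X 0 ω : ℝ))
        = fun ω => max (X 0 ω : ℝ) 0 - max (-(X 0 ω : ℝ)) 0 := by
      funext ω
      rcases le_total ((X 0 ω : ℝ)) 0 with h | h
      · rw [max_eq_right h, max_eq_left (by linarith)]; ring
      · rw [max_eq_left h, max_eq_right (by linarith)]; ring
    have hint : Integrable (fun ω => (X 0 ω : ℝ)) μ := by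
      rw [hXeq]
      exact hpos_int.sub hnegpart
    -- the mean is nonpositive
    have hpos_val : ∫ ω, max (X 0 ω : ℝ) 0 ∂μ ≤ p 0 := by
      rw [integral_eq_lintegral_of_nonneg_ae hnn
        (hmeasR.max measurable_const).aestronglyMeasurable]
      have h7 : ∫⁻ ω, ENNReal.ofReal (max (X 0 ω : ℝ) 0) ∂μ ≤ ENNReal.ofReal (p 0) := by
        calc ∫⁻ ω, ENNReal.ofReal (max (X 0 ω : ℝ) 0) ∂μ = L := by
              rw [hL]; apply lintegral_congr; intro ω; exact hofReal_max _
          _ ≤ ENNReal.ofReal (p 0) := hLle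
      exact ENNReal.toReal_le_of_le_ofReal (hp0 0) h7
    have hneg_val : p 0 ≤ ∫ ω, max (-(X 0 ω : ℝ)) 0 ∂μ := by
      have hset : MeasurableSet {ω | X 0 ω = -1} :=
        (hmeas 0) (measurableSet_singleton (-1))
      have h8 : ∫ ω, ({ω | X 0 ω = -1} : Set Ω).indicator (fun _ => (1:ℝ)) ω ∂μ
          = p 0 := by
        rw [integral_indicator_const (1:ℝ) hset]
        have : ((0:ℕ):ℤ) - 1 = -1 := by norm_num
        simp [hp, hq, this, smul_eq_mul, Measure.real]
      rw [← h8]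
      apply integral_mono_ae ((integrable_const (1:ℝ)).indicator hset) hnegpart
      filter_upwards with ω
      by_cases hmem : ω ∈ {ω | X 0 ω = -1}
      · rw [Set.indicator_of_mem hmem]
        simp only [Set.mem_setOf_eq] at hmem
        rw [hmem]
        norm_num
      · rw [Set.indicator_of_notMem hmem]
        exact le_max_right _ _
    have hmean_le : ∫ ω, (X 0 ω : ℝ) ∂μ ≤ 0 := by
      rw [hXeq, integral_sub hpos_int hnegpart]
      linarith
    rcases hmean with hni | hpos'
    · exact hni hint
    · linarith
  obtain ⟨N, hNpos⟩ := hN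
  obtain ⟨s, hs0, hs1, hFs⟩ := exists_subfixed p hp0 hp1 N hNpos
  set U := {ω | ∃ m : ℕ, ∑ l ∈ Finset.range m, X l ω = -1} with hUdef
  have hcs : μ U ≤ ENNReal.ofReal s := hhit s hs0 hs1 hFs
  set c : ℝ := (μ U).toReal with hc
  have hcle : c ≤ s := ENNReal.toReal_le_of_le_ofReal hs0.le hcs
  have hc1 : c < 1 := lt_of_le_of_lt hcle hs1
  have hc0 : 0 < c := by
    have hsub : {ω | X 0 ω = -1} ⊆ U := by
      intro ω hω
      refine ⟨1, ?_⟩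
      rw [Finset.sum_range_one]
      exact hω
    have h1 : 0 < μ U := lt_of_lt_of_le hminus (measure_mono hsub)
    rw [hc]
    exact ENNReal.toReal_pos h1.ne' (measure_ne_top μ U)
  -- F(c) ≥ c
  have hFc : c ≤ ∑' n : ℕ, p n * c ^ n := by
    by_contra hlt
    push_neg at hlt
    set F := ∑' n : ℕ, p n * c ^ n with hFdef
    have hF0 : 0 ≤ F :=
      tsum_nonneg fun n => mul_nonneg (hp0 n) (pow_nonneg hc0.le n)
    set s' : ℝ := (F + c) / 2 with hs'def
    have hs'0 : 0 < s' := by rw [hs'def]; linarith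
    have hs'c : s' < c := by rw [hs'def]; linarith
    have hs'1 : s' < 1 := lt_trans hs'c hc1
    have hFs' : (∑' n : ℕ, p n * s' ^ n) ≤ s' := by
      have hmono : ∀ n : ℕ, p n * s' ^ n ≤ p n * c ^ n := fun n =>
        mul_le_mul_of_nonneg_left (pow_le_pow_left₀ hs'0.le hs'c.le n) (hp0 n)
      have h2 : (∑' n : ℕ, p n * s' ^ n) ≤ F :=
        Summable.tsum_le_tsum hmono (summable_pF p hple s' hs'0.le hs'1)
          (summable_pF p hple c hc0.le hc1)
      linarith
    have h3 := hhit s' hs'0 hs'1 hFs'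
    have h4 : c ≤ s' := ENNReal.toReal_le_of_le_ofReal hs'0.le h3
    linarith
  -- some p j > 0 with j ≥ 2
  have hj : ∃ j : ℕ, 2 ≤ j ∧ 0 < p j := by
    by_contra hcon2
    push_neg at hcon2
    have hzero : ∀ k : ℤ, 1 ≤ k → μ {ω | X 0 ω = k} = 0 := by
      intro k hk
      have h1 : q ((k+1).toNat) = μ {ω | X 0 ω = k} := by
        rw [hq]
        have : (((k+1).toNat : ℕ) : ℤ) - 1 = k := by omega
        simp only [this]
      have h2 := hcon2 ((k+1).toNat) (by omega)
      have h3 : p ((k+1).toNat) = 0 := le_antisymm h2 (hp0 _)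
      rw [hp] at h3
      rw [← h1]
      exact (ENNReal.toReal_eq_zero_iff _).1 h3 |>.resolve_right (hq_ne_top _)
    have hle0 : ∀ᵐ ω ∂μ, X 0 ω ≤ 0 := by
      have h5 : μ {ω | 0 < X 0 ω} = 0 := by
        have h6 : {ω | 0 < X 0 ω} = ⋃ k : ℕ, {ω | X 0 ω = (k:ℤ) + 1} := by
          ext ω
          simp only [Set.mem_setOf_eq, Set.mem_iUnion]
          constructor
          · intro h
            exact ⟨(X 0 ω - 1).toNat, by omega⟩
          · rintro ⟨k, hk⟩
            omega
        rw [h6, measure_iUnion_null_iff]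
        intro k
        exact hzero ((k:ℤ)+1) (by omega)
      rw [ae_iff]
      convert h5 using 2
      ext ω
      simp [not_le]
    have hbdd : ∀ᵐ ω ∂μ, ‖(X 0 ω : ℝ)‖ ≤ 1 := by
      filter_upwards [hskip, hle0] with ω h1 h2
      rw [Real.norm_eq_abs, abs_le]
      constructor
      · exact_mod_cast h1
      · calc ((X 0 ω : ℤ) : ℝ) ≤ ((0:ℤ):ℝ) := by exact_mod_cast h2
          _ ≤ 1 := by norm_num
    have hint2 : Integrable (fun ω => (X 0 ω : ℝ)) μ :=
      Integrable.mono' (integrable_const 1) hmeasR.aestronglyMeasurable hbdd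
    have hle : ∫ ω, (X 0 ω : ℝ) ∂μ ≤ 0 := by
      apply integral_nonpos_of_ae
      filter_upwards [hle0] with ω h
      show ((X 0 ω : ℤ) : ℝ) ≤ 0
      exact_mod_cast h
    rcases hmean with hni | hpos
    · exact hni hint2
    · linarith
  obtain ⟨j, hj2, hpj⟩ := hj
  exact aux_final p hp0 hp1 c hc0 hc1 hFc j hj2 hpj
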